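/- Let F = {x^{v_1},...,x^{v_q}} be a set of monomials of degree 2 in k[x_1,...,x_n] with no nontrivial common factor. Then the linear syzygy matrix LS(F) has rank q - 1 if and only if F is cohesive (i.e., F cannot be partitioned into two nonempty subsets involving disjoint sets of variables). -/

import Mathlib

open MvPolynomial Module


section Aux

lemma aux_sum_one {n : ℕ} (u : Fin n →₀ ℕ) (h : ∑ i, u i = 1) :
    ∃ d, u = Finsupp.single d 1 := by
  classical
  have hex : ∃ d, u d ≠ 0 := by
    by_contra hc
    push_neg at hc
    simp [hc] at h
  obtain ⟨d, hd⟩ := hex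
  have h2 : u d + ∑ i ∈ Finset.univ.erase d, u i = 1 := by
    rw [Finset.add_sum_erase _ _ (Finset.mem_univ d)]; exact h
  refine ⟨d, ?_⟩
  ext i
  rcases eq_or_ne i d with rfl | hi
  · simp only [Finsupp.single_eq_same]; omega
  · have hz : ∑ i ∈ Finset.univ.erase d, u i = 0 := by omega
    have := Finset.sum_eq_zero_iff.mp hz i (Finset.mem_erase.mpr ⟨hi, Finset.mem_univ i⟩)
    simp [Finsupp.single_apply, (Ne.symm hi : d ≠ i), this]

lemma aux_decomp {n : ℕ} (w : Fin n →₀ ℕ) (h : ∑ i, w i = 2) (c : Fin n) (hc : w c ≠ 0) :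
    ∃ d, w = Finsupp.single c 1 + Finsupp.single d 1 := by
  classical
  set u : Fin n →₀ ℕ := w - Finsupp.single c 1 with hu
  have hw : w = Finsupp.single c 1 + u := by
    ext i
    rw [Finsupp.add_apply, hu, Finsupp.tsub_apply]
    rcases eq_or_ne i c with rfl | hi
    · simp only [Finsupp.single_eq_same]; omega
    · simp [Finsupp.single_apply, (Ne.symm hi : c ≠ i)]
  have hsum1 : ∑ i, (Finsupp.single c 1 : Fin n →₀ ℕ) i = 1 := by
    simp [Finsupp.single_apply]
  have hsumu : ∑ i, u i = 1 := by
    have : ∑ i, w i = ∑ i, (Finsupp.single c 1 : Fin n →₀ ℕ) i + ∑ i, u i := by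
      rw [← Finset.sum_add_distrib]
      exact Finset.sum_congr rfl fun i _ => by rw [hw]; rfl
    omega
  obtain ⟨d, hd⟩ := aux_sum_one u hsumu
  exact ⟨d, by rw [hw, hd]⟩

lemma adj_of_common {n : ℕ} (w1 w2 : Fin n →₀ ℕ) (h1 : ∑ i, w1 i = 2) (h2 : ∑ i, w2 i = 2)
    (c : Fin n) (hc1 : c ∈ w1.support) (hc2 : c ∈ w2.support) :
    ∃ a b, Finsupp.single a 1 + w1 = Finsupp.single b 1 + w2 := by
  obtain ⟨d, hd⟩ := aux_decomp w1 h1 c (Finsupp.mem_support_iff.mp hc1)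
  obtain ⟨e, he⟩ := aux_decomp w2 h2 c (Finsupp.mem_support_iff.mp hc2)
  refine ⟨e, d, ?_⟩
  rw [hd, he]
  abel

lemma common_of_adj {n : ℕ} (w1 w2 : Fin n →₀ ℕ) (h2 : ∑ i, w2 i = 2)
    (a b : Fin n) (hrel : Finsupp.single a 1 + w1 = Finsupp.single b 1 + w2) (hne : w1 ≠ w2) :
    ¬ Disjoint w1.support w2.support := by
  have hab : a ≠ b := by
    rintro rfl
    exact hne (by simpa using hrel)
  have ha2 : w2 a ≠ 0 := by
    have := DFunLike.congr_fun hrel a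
    rw [Finsupp.add_apply, Finsupp.add_apply, Finsupp.single_eq_same,
      Finsupp.single_eq_of_ne' (Ne.symm hab)] at this
    omega
  obtain ⟨d, hd⟩ := aux_decomp w2 h2 a ha2
  have hw1 : w1 = Finsupp.single b 1 + Finsupp.single d 1 := by
    have heq : Finsupp.single a 1 + w1
        = Finsupp.single a 1 + (Finsupp.single b 1 + Finsupp.single d 1) := by
      rw [hrel, hd]; abel
    ext i
    have := DFunLike.congr_fun heq i
    simp only [Finsupp.add_apply] at this ⊢
    omega
  rw [Finset.not_disjoint_iff]
  refine ⟨d, ?_, ?_⟩ <;>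
  · rw [Finsupp.mem_support_iff]
    first
      | (rw [hw1]; simp [Finsupp.add_apply, Finsupp.single_apply])
      | (rw [hd]; simp [Finsupp.add_apply, Finsupp.single_apply])

end Aux


section Chain

lemma exists_chain {q n : ℕ} (v : Fin q → (Fin n →₀ ℕ)) (hq : 0 < q)
    (hconn : ∀ S : Set (Fin q), S.Nonempty → Sᶜ.Nonempty →
      ∃ j ∈ S, ∃ l ∈ Sᶜ, ¬ Disjoint (v j).support (v l).support) :
    ∀ m : ℕ, m ≤ q → ∃ F : Fin m → Fin q, Function.Injective F ∧
      ∀ i : Fin m, i.1 ≠ 0 →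
        ∃ i', i' < i ∧ ¬ Disjoint (v (F i)).support (v (F i')).support := by
  intro m
  induction m with
  | zero =>
    intro _
    exact ⟨fun i => i.elim0, fun a => a.elim0, fun i => i.elim0⟩
  | succ m ih =>
    intro hm
    obtain ⟨F, hinj, hprop⟩ := ih (Nat.le_of_succ_le hm)
    rcases Nat.eq_zero_or_pos m with rfl | hmpos
    · refine ⟨fun _ => ⟨0, hq⟩, fun a b _ => Fin.ext (by omega), fun i hi => ?_⟩
      have := i.isLt
      exact absurd (by omega : i.1 = 0) hi
    · have hS1 : (Set.range F).Nonempty := ⟨F ⟨0, hmpos⟩, Set.mem_range_self _⟩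
      have hS2 : (Set.range F)ᶜ.Nonempty := by
        by_contra h
        rw [Set.not_nonempty_iff_eq_empty, Set.compl_empty_iff, Set.range_eq_univ] at h
        have := Fintype.card_le_of_surjective F h
        simp only [Fintype.card_fin] at this
        omega
      obtain ⟨j, hj, l, hl, hdis⟩ := hconn (Set.range F) hS1 hS2
      obtain ⟨i0, rfl⟩ := hj
      have hlF : ∀ x, F x ≠ l := fun x hx => hl ⟨x, hx⟩
      refine ⟨Fin.snoc F l, ?_, ?_⟩
      · intro x y hxy
        induction x using Fin.lastCases with
        | last =>
          induction y using Fin.lastCases with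
          | last => rfl
          | cast y =>
            rw [Fin.snoc_last, Fin.snoc_castSucc] at hxy
            exact absurd hxy.symm (hlF y)
        | cast x =>
          induction y using Fin.lastCases with
          | last =>
            rw [Fin.snoc_last, Fin.snoc_castSucc] at hxy
            exact absurd hxy (hlF x)
          | cast y =>
            rw [Fin.snoc_castSucc, Fin.snoc_castSucc] at hxy
            rw [hinj hxy]
      · intro i hi
        induction i using Fin.lastCases with
        | last =>
          refine ⟨i0.castSucc, Fin.castSucc_lt_last i0, ?_⟩
          rw [Fin.snoc_last, Fin.snoc_castSucc]
          exact fun hd => hdis hd.symm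
        | cast i =>
          obtain ⟨i', hlt, hd⟩ := hprop i hi
          refine ⟨i'.castSucc, Fin.castSucc_lt_castSucc_iff.mpr hlt, ?_⟩
          rw [Fin.snoc_castSucc, Fin.snoc_castSucc]
          exact hd

end Chain

section Rank

variable {R : Type*} [CommRing R] [IsDomain R] {q r : ℕ}

lemma rank_le_aux (W : Submodule R (Fin q → R)) (ψ : (Fin q → R) →ₗ[R] (Fin r → R))
    (hW : W ≤ LinearMap.ker ψ)
    (u : Fin r → Fin r → R) (hu : ∀ s, u s ∈ LinearMap.range ψ)
    (hind : LinearIndependent R u) :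
    finrank R W ≤ q - r := by
  have hrn := LinearMap.rank_range_add_rank_ker ψ
  rw [rank_fin_fun q] at hrn
  have hker_le : Module.rank R (LinearMap.ker ψ) ≤ q := by
    have := Submodule.rank_le (LinearMap.ker ψ)
    rwa [rank_fin_fun q] at this
  have hker_lt : Module.rank R (LinearMap.ker ψ) < Cardinal.aleph0 :=
    lt_of_le_of_lt hker_le (Cardinal.nat_lt_aleph0 q)
  have hran_le : Module.rank R (LinearMap.range ψ) ≤ r := by
    have := Submodule.rank_le (LinearMap.range ψ)
    rwa [rank_fin_fun r] at this
  have hran_lt : Module.rank R (LinearMap.range ψ) < Cardinal.aleph0 :=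
    lt_of_le_of_lt hran_le (Cardinal.nat_lt_aleph0 r)
  -- r ≤ rank range ψ
  have hind' : LinearIndependent R (fun s : Fin r => (⟨u s, hu s⟩ : LinearMap.range ψ)) := by
    apply LinearIndependent.of_comp (LinearMap.range ψ).subtype
    simpa [Function.comp_def] using hind
  have hr_le : (r : Cardinal) ≤ Module.rank R (LinearMap.range ψ) := by
    have := hind'.cardinal_lift_le_rank
    rw [Cardinal.mk_fin, Cardinal.lift_natCast, ← Cardinal.lift_le.{0}] at this
    simpa using this
  have hWle : Module.rank R W ≤ Module.rank R (LinearMap.ker ψ) := Submodule.rank_mono hW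
  have h1 : finrank R W ≤ Cardinal.toNat (Module.rank R (LinearMap.ker ψ)) :=
    Cardinal.toNat_le_toNat hWle hker_lt
  have h2 : Cardinal.toNat (Module.rank R (LinearMap.range ψ))
      + Cardinal.toNat (Module.rank R (LinearMap.ker ψ)) = q := by
    rw [← Cardinal.toNat_add hran_lt hker_lt, hrn, Cardinal.toNat_natCast]
  have h3 : r ≤ Cardinal.toNat (Module.rank R (LinearMap.range ψ)) := by
    have := Cardinal.toNat_le_toNat hr_le hran_lt
    rwa [Cardinal.toNat_natCast] at this
  omega

lemma rank_ge_aux (W : Submodule R (Fin q → R)) (u : Fin r → Fin q → R) (hu : ∀ s, u s ∈ W)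
    (hind : LinearIndependent R u) : r ≤ finrank R W := by
  have hW_le : Module.rank R W ≤ q := by
    have := Submodule.rank_le W
    rwa [rank_fin_fun q] at this
  have hW_lt : Module.rank R W < Cardinal.aleph0 :=
    lt_of_le_of_lt hW_le (Cardinal.nat_lt_aleph0 q)
  have hind' : LinearIndependent R (fun s : Fin r => (⟨u s, hu s⟩ : W)) := by
    apply LinearIndependent.of_comp W.subtype
    simpa [Function.comp_def] using hind
  have hr_le : (r : Cardinal) ≤ Module.rank R W := by
    have := hind'.cardinal_lift_le_rank
    rw [Cardinal.mk_fin, Cardinal.lift_natCast, ← Cardinal.lift_le.{0}] at this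
    simpa using this
  have := Cardinal.toNat_le_toNat hr_le hW_lt
  rwa [Cardinal.toNat_natCast] at this

end Rank
open scoped Classical in
/-- Let `F = {x^{v_1},…,x^{v_q}}` be distinct monomials of degree `2` with no
nontrivial common factor.  Then the linear syzygy matrix `LS(F)` has rank `q - 1`
if and only if `F` is cohesive, i.e. `F` cannot be partitioned into two nonempty
subsets involving disjoint sets of variables. -/
theorem stmt_14 (n q : ℕ) (k : Type*) [Field k]
    (v : Fin q → (Fin n →₀ ℕ)) (hv : Function.Injective v)
    (hdeg : ∀ j, ∑ i, v j i = 2)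
    (hgcd : ∀ i : Fin n, ∃ j, v j i = 0)
    (LS : Matrix (Fin q)
      {t : (Fin n × Fin n) × (Fin q × Fin q) //
        Finsupp.single t.1.1 1 + v t.2.1 = Finsupp.single t.1.2 1 + v t.2.2}
      (MvPolynomial (Fin n) k))
    (hLS : ∀ t j, LS j t =
      (if j = t.1.2.1 then X t.1.1.1 else 0) - (if j = t.1.2.2 then X t.1.1.2 else 0)) :
    LS.rank = q - 1 ↔
      ¬ ∃ S : Set (Fin q), S.Nonempty ∧ Sᶜ.Nonempty ∧
          ∀ j ∈ S, ∀ l ∈ Sᶜ, Disjoint (v j).support (v l).support := by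
  classical
  rcases Nat.eq_zero_or_pos q with rfl | hq
  · constructor
    · rintro _ ⟨S, ⟨j, _⟩, _, _⟩
      exact j.elim0
    · intro _
      haveI hss : Subsingleton (Fin 0 → MvPolynomial (Fin n) k) :=
        ⟨fun a b => funext fun i => i.elim0⟩
      haveI : Subsingleton (LinearMap.range LS.mulVecLin) :=
        ⟨fun a b => Subtype.ext (Subsingleton.elim _ _)⟩
      show Module.finrank _ _ = 0 - 1
      rw [Nat.zero_sub]
      exact Module.finrank_zero_of_subsingleton
  -- notation
  have hXne : ∀ a : Fin n, (X a : MvPolynomial (Fin n) k) ≠ 0 := fun a => X_ne_zero a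
  set mono : Fin q → MvPolynomial (Fin n) k := fun j => monomial (v j) (1 : k) with hmono_def
  have hmono : ∀ j, mono j ≠ 0 := fun j h =>
    (one_ne_zero : (1 : k) ≠ 0) (MvPolynomial.monomial_eq_zero.mp h)
  have hmul : ∀ (a : Fin n) (j : Fin q),
      mono j * X a = monomial (Finsupp.single a 1 + v j) (1 : k) := by
    intro a j
    show monomial (v j) (1 : k) * monomial (Finsupp.single a 1) 1 = _
    rw [monomial_mul, one_mul, add_comm]
  -- inclusion lemma : if the rows of B satisfy the syzygy relations,
  -- the range of LS is inside the kernel of B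
  have hincl : ∀ (r : ℕ) (B : Matrix (Fin r) (Fin q) (MvPolynomial (Fin n) k)),
      (∀ t : {t : (Fin n × Fin n) × (Fin q × Fin q) //
        Finsupp.single t.1.1 1 + v t.2.1 = Finsupp.single t.1.2 1 + v t.2.2},
        ∀ s, B s t.1.2.1 * X t.1.1.1 = B s t.1.2.2 * X t.1.1.2) →
      LinearMap.range LS.mulVecLin ≤ LinearMap.ker B.mulVecLin := by
    intro r B hB
    have hBLS : B * LS = 0 := by
      refine Matrix.ext fun s t => ?_
      rw [Matrix.mul_apply]
      simp only [hLS, mul_sub, mul_ite, mul_zero]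
      rw [Finset.sum_sub_distrib, Finset.sum_ite_eq', Finset.sum_ite_eq']
      simp only [Finset.mem_univ, if_true]
      rw [Matrix.zero_apply, sub_eq_zero]
      exact hB t s
    rintro x ⟨y, rfl⟩
    rw [LinearMap.mem_ker]
    show B.mulVecLin (LS.mulVecLin y) = 0
    rw [← LinearMap.comp_apply, ← Matrix.mulVecLin_mul, hBLS]
    simp
  constructor
  · -- rank = q - 1 → cohesive
    intro hrank
    rintro ⟨S, ⟨j0, hj0⟩, ⟨l0, hl0⟩, hdisj⟩
    have hj0l0 : j0 ≠ l0 := fun h => hl0 (h ▸ hj0)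
    have h2 : 2 ≤ q := by
      have h1 : 1 < Fintype.card (Fin q) :=
        Fintype.one_lt_card_iff_nontrivial.mpr ⟨⟨j0, l0, hj0l0⟩⟩
      rwa [Fintype.card_fin] at h1
    set B : Matrix (Fin 2) (Fin q) (MvPolynomial (Fin n) k) :=
      fun s j => if (j ∈ S ↔ s = 0) then mono j else 0 with hB_def
    have hB : ∀ t : {t : (Fin n × Fin n) × (Fin q × Fin q) //
        Finsupp.single t.1.1 1 + v t.2.1 = Finsupp.single t.1.2 1 + v t.2.2},
        ∀ s, B s t.1.2.1 * X t.1.1.1 = B s t.1.2.2 * X t.1.1.2 := by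
      rintro ⟨⟨⟨a, b⟩, ⟨j1, j2⟩⟩, hrel⟩ s
      show B s j1 * X a = B s j2 * X b
      by_cases hj12 : j1 = j2
      · subst hj12
        have hab : a = b := by
          have hsing : Finsupp.single a (1:ℕ) = Finsupp.single b 1 :=
            add_right_cancel hrel
          exact (Finsupp.single_left_inj one_ne_zero).mp hsing
        rw [hab]
      · have hne : ¬ Disjoint (v j1).support (v j2).support :=
          common_of_adj (v j1) (v j2) (hdeg j2) a b hrel (fun h => hj12 (hv h))
        have hSS : (j1 ∈ S) ↔ (j2 ∈ S) := by
          constructor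
          · intro h1
            by_contra h2'
            exact hne (hdisj j1 h1 j2 h2')
          · intro h2'
            by_contra h1
            exact hne (hdisj j2 h2' j1 h1).symm
        by_cases hc : (j1 ∈ S ↔ s = 0)
        · rw [hB_def]
          simp only []
          rw [if_pos hc, if_pos (hSS.symm.trans hc), hmul, hmul, hrel]
        · rw [hB_def]
          simp only []
          rw [if_neg hc, if_neg (fun h => hc (hSS.trans h)), zero_mul, zero_mul]
    -- two independent elements in the range of B
    set js : Fin 2 → Fin q := ![j0, l0] with hjs
    set u : Fin 2 → Fin 2 → MvPolynomial (Fin n) k :=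
      fun s => B.mulVec (Pi.single (js s) 1) with hu_def
    have hu : ∀ s, u s ∈ LinearMap.range B.mulVecLin :=
      fun s => ⟨Pi.single (js s) 1, rfl⟩
    have huval : ∀ s s', u s s' = B s' (js s) := by
      intro s s'
      rw [hu_def]
      simp [Matrix.mulVec_single]
    have e00 : B 0 j0 = mono j0 := if_pos (iff_of_true hj0 rfl)
    have e01 : B 0 l0 = 0 := if_neg (fun h => hl0 (h.mpr rfl))
    have e10 : B 1 j0 = 0 := if_neg (fun h => by
      have := h.mp hj0
      exact absurd this (by decide))
    have e11 : B 1 l0 = mono l0 := if_pos (iff_of_false hl0 (by decide))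
    have hindep : LinearIndependent (MvPolynomial (Fin n) k) u := by
      rw [Fintype.linearIndependent_iff]
      intro g hg
      rw [Fin.sum_univ_two] at hg
      have hc0 := congrFun hg 0
      have hc1 := congrFun hg 1
      simp only [Pi.add_apply, Pi.smul_apply, smul_eq_mul, Pi.zero_apply] at hc0 hc1
      rw [huval, huval] at hc0
      rw [huval, huval] at hc1
      have hjs0 : js 0 = j0 := rfl
      have hjs1 : js 1 = l0 := rfl
      rw [hjs0, hjs1, e00, e01, mul_zero, add_zero] at hc0
      rw [hjs0, hjs1, e10, e11, mul_zero, zero_add] at hc1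
      have hg0 : g 0 = 0 := by
        rcases mul_eq_zero.mp hc0 with h | h
        · exact h
        · exact absurd h (hmono j0)
      have hg1 : g 1 = 0 := by
        rcases mul_eq_zero.mp hc1 with h | h
        · exact h
        · exact absurd h (hmono l0)
      intro s
      fin_cases s
      · exact hg0
      · exact hg1
    have hle : Module.finrank (MvPolynomial (Fin n) k)
        (LinearMap.range LS.mulVecLin) ≤ q - 2 :=
      rank_le_aux (LinearMap.range LS.mulVecLin) B.mulVecLin (hincl 2 B hB) u hu hindep
    have hrank' : Module.finrank (MvPolynomial (Fin n) k)
        (LinearMap.range LS.mulVecLin) = q - 1 := hrank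
    omega
  · -- cohesive → rank = q - 1
    intro hconn'
    have hconn : ∀ S : Set (Fin q), S.Nonempty → Sᶜ.Nonempty →
        ∃ j ∈ S, ∃ l ∈ Sᶜ, ¬ Disjoint (v j).support (v l).support := by
      intro S h1 h2
      by_contra hc
      push_neg at hc
      exact hconn' ⟨S, h1, h2, hc⟩
    -- upper bound
    set B1 : Matrix (Fin 1) (Fin q) (MvPolynomial (Fin n) k) := fun _ j => mono j with hB1_def
    have hB1 : ∀ t : {t : (Fin n × Fin n) × (Fin q × Fin q) //
        Finsupp.single t.1.1 1 + v t.2.1 = Finsupp.single t.1.2 1 + v t.2.2},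
        ∀ s, B1 s t.1.2.1 * X t.1.1.1 = B1 s t.1.2.2 * X t.1.1.2 := by
      rintro ⟨⟨⟨a, b⟩, ⟨j1, j2⟩⟩, hrel⟩ s
      show mono j1 * X a = mono j2 * X b
      rw [hmul, hmul, hrel]
    set j0' : Fin q := ⟨0, hq⟩ with hj0'
    set u1 : Fin 1 → Fin 1 → MvPolynomial (Fin n) k :=
      fun _ => B1.mulVec (Pi.single j0' 1) with hu1_def
    have hu1 : ∀ s, u1 s ∈ LinearMap.range B1.mulVecLin :=
      fun s => ⟨Pi.single j0' 1, rfl⟩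
    have hindep1 : LinearIndependent (MvPolynomial (Fin n) k) u1 := by
      apply linearIndependent_unique_iff.mpr
      intro h
      have := congrFun h 0
      rw [hu1_def] at this
      simp only [Matrix.mulVec_single, mul_one, Pi.zero_apply] at this
      exact hmono j0' (by simpa [hB1_def] using this : Matrix.col (fun _ j => mono j) j0' (0 : Fin 1) = 0)
    have hle : Module.finrank (MvPolynomial (Fin n) k)
        (LinearMap.range LS.mulVecLin) ≤ q - 1 :=
      rank_le_aux (LinearMap.range LS.mulVecLin) B1.mulVecLin (hincl 1 B1 hB1) u1 hu1 hindep1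
    -- lower bound via a chain
    obtain ⟨F, hFinj, hFprop⟩ := exists_chain v hq hconn q le_rfl
    set mi : Fin (q-1) → Fin q := fun i => ⟨i.1 + 1, by have := i.2; omega⟩ with hmi
    have hstep : ∀ i : Fin (q-1), ∃ (i' : Fin q) (a b : Fin n),
        i' < mi i ∧ Finsupp.single a 1 + v (F (mi i)) = Finsupp.single b 1 + v (F i') := by
      intro i
      have hi : (mi i).1 ≠ 0 := by simp [hmi]
      obtain ⟨i', hlt, hd⟩ := hFprop _ hi
      obtain ⟨c, hc1, hc2⟩ := Finset.not_disjoint_iff.mp hd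
      obtain ⟨a, b, hab⟩ := adj_of_common _ _ (hdeg _) (hdeg _) c hc1 hc2
      exact ⟨i', a, b, hlt, hab⟩
    choose m' aedge bedge hlt hrel using hstep
    set w : Fin (q-1) → Fin q → MvPolynomial (Fin n) k :=
      fun i j => (if j = F (mi i) then X (aedge i) else 0)
        - (if j = F (m' i) then X (bedge i) else 0) with hw_def
    have hw_mem : ∀ i, w i ∈ LinearMap.range LS.mulVecLin := by
      intro i
      rw [Matrix.range_mulVecLin]
      refine Submodule.subset_span
        ⟨⟨((aedge i, bedge i), (F (mi i), F (m' i))), hrel i⟩, ?_⟩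
      funext j
      show LS j _ = w i j
      rw [hLS]
    have hindep : LinearIndependent (MvPolynomial (Fin n) k) w := by
      rw [Fintype.linearIndependent_iff]
      intro g hg
      by_contra hcg
      push_neg at hcg
      obtain ⟨i₀, hi₀⟩ := hcg
      set T : Finset (Fin (q-1)) := Finset.univ.filter (fun i => g i ≠ 0) with hT
      have hTne : T.Nonempty := ⟨i₀, by simp [hT, hi₀]⟩
      set M := T.max' hTne with hM
      have hgM : g M ≠ 0 := (Finset.mem_filter.mp (T.max'_mem hTne)).2
      have hcoord := congrFun hg (F (mi M))
      rw [Finset.sum_apply] at hcoord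
      simp only [Pi.smul_apply, smul_eq_mul, Pi.zero_apply] at hcoord
      have hsum : ∑ i, g i * (w i (F (mi M))) = g M * X (aedge M) := by
        rw [Finset.sum_eq_single M]
        · have hne : F (mi M) ≠ F (m' M) := by
            intro h
            have h1 := hFinj h
            have h2 := hlt M
            rw [← h1] at h2
            exact lt_irrefl _ h2
          simp [hw_def, hne]
        · intro i _ hiM
          rcases eq_or_ne (g i) 0 with h0 | h0
          · rw [h0, zero_mul]
          · have hiT : i ∈ T := by simp [hT, h0]
            have hile : i ≤ M := T.le_max' i hiT
            have hval_le : i.1 ≤ M.1 := hile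
            have h1 : F (mi M) ≠ F (mi i) := by
              intro h
              apply hiM
              have := congrArg Fin.val (hFinj h)
              simp only [hmi] at this
              exact Fin.ext (by omega)
            have h2 : F (mi M) ≠ F (m' i) := by
              intro h
              have hval := congrArg Fin.val (hFinj h)
              have hlt' : (m' i).1 < (mi i).1 := hlt i
              simp only [hmi] at hval hlt'
              omega
            simp [hw_def, h1, h2]
        · intro h
          exact absurd (Finset.mem_univ M) h
      rw [hsum] at hcoord
      rcases mul_eq_zero.mp hcoord with h | h
      · exact hgM h
      · exact hXne _ h
    have hge : q - 1 ≤ Module.finrank (MvPolynomial (Fin n) k)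
        (LinearMap.range LS.mulVecLin) :=
      rank_ge_aux (LinearMap.range LS.mulVecLin) w hw_mem hindep
    exact le_antisymm hle hge
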